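/- For a spin chain with Hamiltonian H(z_u, z_v, s) = -∑_{i=1}^{k} J_i s_{i-1} s_i (where s_0 = z_u, s_k = z_v, s_i ∈ {-1,+1} for internal spins), the minimum over internal spin assignments s equals -∑_i |J_i| if z_v = (-1)^p z_u, and -∑_i |J_i| + 2·min_i |J_i| if z_v = -(-1)^p z_u, where p is the number of indices i with J_i < 0. -/

import Mathlib

lemma pm_mul_self {a : ℝ} (h : a = 1 ∨ a = -1) : a * a = 1 := by
  rcases h with h | h <;> rw [h] <;> norm_num

lemma pm_mul {a b : ℝ} (ha : a = 1 ∨ a = -1) (hb : b = 1 ∨ b = -1) :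
    a * b = 1 ∨ a * b = -1 := by
  rcases ha with h | h <;> rcases hb with h2 | h2 <;> rw [h, h2] <;> norm_num

lemma pm_neq {a b : ℝ} (ha : a = 1 ∨ a = -1) (hb : b = 1 ∨ b = -1) (h : a ≠ b) : a = -b := by
  rcases ha with ha | ha <;> rcases hb with hb | hb <;> subst ha <;> subst hb <;> norm_num at h <;> norm_num

lemma prod_sign (k : ℕ) (J : Fin k → ℝ) :
    ∏ i : Fin k, (if J i < 0 then (-1 : ℝ) else 1)
      = (-1 : ℝ) ^ (Finset.univ.filter (fun i => J i < 0)).card := by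
  rw [Finset.prod_ite, Finset.prod_const, Finset.prod_const]
  simp

lemma telescope (f : ℕ → ℝ) (hf : ∀ j, f j * f j = 1) (n : ℕ) :
    ∏ i ∈ Finset.range n, (f i * f (i + 1)) = f 0 * f n := by
  induction n with
  | zero => simp [(hf 0)]
  | succ n ih =>
    rw [Finset.prod_range_succ, ih]
    calc f 0 * f n * (f n * f (n + 1)) = f 0 * (f n * f n) * f (n + 1) := by ring
    _ = f 0 * f (n + 1) := by rw [hf n]; ring

lemma chain_exists (k : ℕ) (J : Fin k → ℝ) (zu : ℝ) (hzu : zu = 1 ∨ zu = -1)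
    (t : Fin k → ℝ) (ht : ∀ i, t i = 1 ∨ t i = -1) :
    ∃ s : Fin (k + 1) → ℝ,
      (∀ i, s i ∈ ({-1, 1} : Set ℝ)) ∧ s 0 = zu ∧
      s (Fin.last k) = zu * ∏ i : Fin k, t i ∧
      (-∑ i : Fin k, J i * s i.castSucc * s i.succ) = -∑ i : Fin k, J i * t i := by
  set t' : ℕ → ℝ := fun j => if h : j < k then t ⟨j, h⟩ else 1 with ht'
  have ht'pm : ∀ j, t' j = 1 ∨ t' j = -1 := by
    intro j; simp only [ht']; split
    · exact ht _
    · left; rfl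
  refine ⟨fun i => zu * ∏ j ∈ Finset.range i, t' j, ?_, ?_, ?_, ?_⟩
  · intro i
    have : ∀ (m : ℕ), zu * ∏ j ∈ Finset.range m, t' j = 1 ∨
        zu * ∏ j ∈ Finset.range m, t' j = -1 := by
      intro m
      induction m with
      | zero => simpa using hzu
      | succ m ih =>
        rw [Finset.prod_range_succ, ← mul_assoc]
        rcases ih with h | h <;> rcases ht'pm m with h2 | h2 <;> rw [h, h2] <;> norm_num
    have h := this i
    simp only [Set.mem_insert_iff, Set.mem_singleton_iff]
    tauto
  · simp
  · have : ∏ j ∈ Finset.range k, t' j = ∏ i : Fin k, t i := by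
      rw [← Fin.prod_univ_eq_prod_range]
      exact Finset.prod_congr rfl (fun i _ => by simp [ht', i.isLt])
    simp [Fin.last, this]
  · congr 1
    refine Finset.sum_congr rfl (fun i _ => ?_)
    have hc : (i.castSucc : ℕ) = (i : ℕ) := rfl
    have hs : (i.succ : ℕ) = (i : ℕ) + 1 := rfl
    have hpm : ∀ m : ℕ, (zu * ∏ j ∈ Finset.range m, t' j) * (zu * ∏ j ∈ Finset.range m, t' j) = 1 := by
      intro m
      induction m with
      | zero => simpa using pm_mul_self hzu
      | succ m ih =>
        rw [Finset.prod_range_succ]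
        calc (zu * (((∏ j ∈ Finset.range m, t' j)) * t' m)) * (zu * ((∏ j ∈ Finset.range m, t' j) * t' m))
            = ((zu * ∏ j ∈ Finset.range m, t' j) * (zu * ∏ j ∈ Finset.range m, t' j)) * (t' m * t' m) := by ring
        _ = 1 := by rw [ih, pm_mul_self (ht'pm m)]; norm_num
    simp only [hc, hs, Finset.prod_range_succ]
    have hti : t' (i : ℕ) = t i := by simp [ht', i.isLt]
    calc J i * (zu * ∏ j ∈ Finset.range (i : ℕ), t' j) * (zu * ((∏ j ∈ Finset.range (i : ℕ), t' j) * t' (i : ℕ)))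
        = J i * t' (i : ℕ) * ((zu * ∏ j ∈ Finset.range (i : ℕ), t' j) * (zu * ∏ j ∈ Finset.range (i : ℕ), t' j)) := by ring
    _ = J i * t i := by rw [hpm, hti]; ring

lemma fin_telescope (k : ℕ) (s : Fin (k + 1) → ℝ) (hs : ∀ i, s i = 1 ∨ s i = -1) :
    ∏ i : Fin k, (s i.castSucc * s i.succ) = s 0 * s (Fin.last k) := by
  set f : ℕ → ℝ := fun j => if h : j < k + 1 then s ⟨j, h⟩ else 1 with hf
  have hfpm : ∀ j, f j * f j = 1 := by
    intro j; simp only [hf]; split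
    · exact pm_mul_self (hs _)
    · norm_num
  have h1 : ∏ i : Fin k, (s i.castSucc * s i.succ) = ∏ j ∈ Finset.range k, (f j * f (j + 1)) := by
    rw [← Fin.prod_univ_eq_prod_range]
    refine Finset.prod_congr rfl (fun i _ => ?_)
    have h2 : f (i : ℕ) = s i.castSucc := by
      simp only [hf]; rw [dif_pos (by omega : (i : ℕ) < k + 1)]; rfl
    have h3 : f ((i : ℕ) + 1) = s i.succ := by
      simp only [hf]; rw [dif_pos (by omega : (i : ℕ) + 1 < k + 1)]; rfl
    rw [h2, h3]
  rw [h1, telescope f hfpm k]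
  congr 1
  · simp only [hf]; rw [dif_pos (by omega : k < k + 1)]; rfl

theorem spin_chain_min (k : ℕ) (hk : 1 ≤ k) (J : Fin k → ℝ) (hJ : ∀ i, J i ≠ 0)
    (zu zv : ℝ) (hu : zu ∈ ({-1, 1} : Set ℝ)) (hv : zv ∈ ({-1, 1} : Set ℝ)) :
    IsLeast
      {E : ℝ | ∃ s : Fin (k + 1) → ℝ,
        (∀ i, s i ∈ ({-1, 1} : Set ℝ)) ∧ s 0 = zu ∧ s (Fin.last k) = zv ∧
        E = -∑ i : Fin k, J i * s i.castSucc * s i.succ}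
      (if zv = (-1 : ℝ) ^ (Finset.univ.filter (fun i => J i < 0)).card * zu
        then -∑ i : Fin k, |J i|
        else -∑ i : Fin k, |J i|
          + 2 * Finset.univ.inf' (Finset.univ_nonempty_iff.mpr ⟨⟨0, hk⟩⟩) (fun i => |J i|)) := by
  set p := (Finset.univ.filter (fun i => J i < 0)).card with hp
  have hzu : zu = 1 ∨ zu = -1 := by simp only [Set.mem_insert_iff, Set.mem_singleton_iff] at hu; tauto
  have hzv : zv = 1 ∨ zv = -1 := by simp only [Set.mem_insert_iff, Set.mem_singleton_iff] at hv; tauto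
  set σ : Fin k → ℝ := fun i => if J i < 0 then -1 else 1 with hσ
  have hσpm : ∀ i, σ i = 1 ∨ σ i = -1 := by
    intro i; simp only [hσ]; split
    · right; rfl
    · left; rfl
  have hJσ : ∀ i, J i * σ i = |J i| := by
    intro i
    by_cases h : J i < 0
    · simp only [hσ, if_pos h]; rw [abs_of_neg h]; ring
    · simp only [hσ, if_neg h]; rw [abs_of_nonneg (le_of_not_gt h)]; ring
  have hprodσ : ∏ i : Fin k, σ i = (-1 : ℝ) ^ p := prod_sign k J
  have hppm : (-1 : ℝ) ^ p = 1 ∨ (-1 : ℝ) ^ p = -1 := by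
    rcases Nat.even_or_odd p with h | h
    · left; exact h.neg_one_pow
    · right; exact h.neg_one_pow
  set ne : (Finset.univ : Finset (Fin k)).Nonempty := Finset.univ_nonempty_iff.mpr ⟨⟨0, hk⟩⟩
  obtain ⟨i0, -, hi0⟩ := Finset.exists_mem_eq_inf' ne (fun i => |J i|)
  have hinf_le : ∀ i, Finset.univ.inf' ne (fun i => |J i|) ≤ |J i| :=
    fun i => Finset.inf'_le _ (Finset.mem_univ i)
  constructor
  · -- membership
    split_ifs with hcase
    · obtain ⟨s, hs1, hs2, hs3, hs4⟩ := chain_exists k J zu hzu σ hσpm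
      refine ⟨s, hs1, hs2, ?_, ?_⟩
      · rw [hs3, hprodσ, hcase]; ring
      · rw [hs4]
        congr 1
        exact Finset.sum_congr rfl (fun i _ => (hJσ i).symm)
    · have hzvneg : zv = -((-1 : ℝ) ^ p * zu) :=
        pm_neq hzv (pm_mul hppm hzu) hcase
      set t : Fin k → ℝ := fun i => if i = i0 then -σ i else σ i with htdef
      have htpm : ∀ i, t i = 1 ∨ t i = -1 := by
        intro i; simp only [htdef]; split
        · rcases hσpm i with h | h <;> rw [h] <;> norm_num
        · exact hσpm i
      obtain ⟨s, hs1, hs2, hs3, hs4⟩ := chain_exists k J zu hzu t htpm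
      have hprodt : ∏ i : Fin k, t i = -((-1 : ℝ) ^ p) := by
        have hsplit : ∀ i, t i = σ i * (if i = i0 then (-1 : ℝ) else 1) := by
          intro i; simp only [htdef]; split <;> ring
        calc ∏ i : Fin k, t i = ∏ i : Fin k, (σ i * (if i = i0 then (-1:ℝ) else 1)) :=
              Finset.prod_congr rfl (fun i _ => hsplit i)
        _ = (∏ i : Fin k, σ i) * ∏ i : Fin k, (if i = i0 then (-1:ℝ) else 1) := Finset.prod_mul_distrib
        _ = (-1 : ℝ) ^ p * (-1) := by
              rw [hprodσ, Finset.prod_ite_eq' Finset.univ i0 (fun _ => (-1:ℝ))]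
              simp
        _ = -((-1 : ℝ) ^ p) := by ring
      have hsum : ∑ i : Fin k, J i * t i = (∑ i : Fin k, |J i|) - 2 * |J i0| := by
        have : ∀ i : Fin k, J i * t i = |J i| - (if i = i0 then 2 * |J i0| else 0) := by
          intro i
          by_cases h : i = i0
          · subst h
            simp only [htdef, if_pos rfl]
            have h4 : J i * -σ i = -(J i * σ i) := by ring
            rw [h4, hJσ i]
            simp only [if_true]
            ring
          · simp only [htdef, if_neg h]
            rw [hJσ i]; simp [h]
        rw [Finset.sum_congr rfl (fun i _ => this i), Finset.sum_sub_distrib,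
          Finset.sum_ite_eq' Finset.univ i0 (fun _ => 2 * |J i0|)]
        simp
      refine ⟨s, hs1, hs2, ?_, ?_⟩
      · rw [hs3, hprodt, hzvneg]; ring
      · rw [hs4, hsum, hi0]; ring
  · -- lower bound
    rintro E ⟨s, hs1, hs2, hs3, rfl⟩
    have hspm : ∀ i, s i = 1 ∨ s i = -1 := by
      intro i; have := hs1 i
      simp only [Set.mem_insert_iff, Set.mem_singleton_iff] at this; tauto
    set t : Fin k → ℝ := fun i => s i.castSucc * s i.succ with htdef
    have htpm : ∀ i, t i = 1 ∨ t i = -1 := fun i => pm_mul (hspm _) (hspm _)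
    have hE : ∑ i : Fin k, J i * s i.castSucc * s i.succ = ∑ i : Fin k, J i * t i :=
      Finset.sum_congr rfl (fun i _ => by simp only [htdef]; ring)
    have hle : ∀ i, J i * t i ≤ |J i| := by
      intro i
      calc J i * t i ≤ |J i * t i| := le_abs_self _
      _ = |J i| * |t i| := abs_mul _ _
      _ = |J i| := by rcases htpm i with h | h <;> rw [h] <;> simp
    have hprodt : ∏ i : Fin k, t i = zu * zv := by
      rw [fin_telescope k s hspm, hs2, hs3]
    rw [hE]
    split_ifs with hcase
    · have : ∑ i : Fin k, J i * t i ≤ ∑ i : Fin k, |J i| :=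
        Finset.sum_le_sum (fun i _ => hle i)
      linarith
    · have hzvneg : zv = -((-1 : ℝ) ^ p * zu) := pm_neq hzv (pm_mul hppm hzu) hcase
      have hprodt2 : ∏ i : Fin k, t i = -((-1 : ℝ) ^ p) := by
        rw [hprodt, hzvneg]
        calc zu * -((-1 : ℝ) ^ p * zu) = -((-1 : ℝ) ^ p) * (zu * zu) := by ring
        _ = -((-1 : ℝ) ^ p) := by rw [pm_mul_self hzu]; ring
      have hex : ∃ i, t i ≠ σ i := by
        by_contra h
        push_neg at h
        have : ∏ i : Fin k, t i = (-1 : ℝ) ^ p := by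
          rw [Finset.prod_congr rfl (fun i _ => h i)]; exact hprodσ
        rw [hprodt2] at this
        rcases hppm with h2 | h2 <;> rw [h2] at this <;> norm_num at this
      obtain ⟨i1, hi1⟩ := hex
      have ht1 : t i1 = -σ i1 := pm_neq (htpm i1) (hσpm i1) hi1
      have hJt1 : J i1 * t i1 = -|J i1| := by rw [ht1, ← hJσ i1]; ring
      have hsum_le : ∑ i : Fin k, J i * t i ≤ (∑ i : Fin k, |J i|) - 2 * |J i1| := by
        have h1 : ∑ i : Fin k, J i * t i
            = J i1 * t i1 + ∑ i ∈ Finset.univ.erase i1, J i * t i :=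
          (Finset.add_sum_erase _ _ (Finset.mem_univ i1)).symm
        have h2 : ∑ i ∈ Finset.univ.erase i1, J i * t i ≤ ∑ i ∈ Finset.univ.erase i1, |J i| :=
          Finset.sum_le_sum (fun i _ => hle i)
        have h3 : ∑ i ∈ Finset.univ.erase i1, |J i| = (∑ i : Fin k, |J i|) - |J i1| :=
          Finset.sum_erase_eq_sub (Finset.mem_univ i1)
        rw [h1, hJt1]
        linarith
      have := hinf_le i1
      linarith
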